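/- For integers n ≥ 1: ∑_{l=0}^{n} C(n,l) 2^{-l} B_l B_{n-l}(x) = (n/2^n)(2x-1) B_{n-1}(2x) - ((n-1)/2^n) B_n(2x) - (n/4) B_{n-1}(x), as an identity of polynomials in x. -/

import Mathlib

open Polynomial

noncomputable def Lint : ℚ[X] →ₗ[ℚ] ℚ where
  toFun p := p.sum fun i a => a / (i + 1)
  map_add' p q := Polynomial.sum_add_index p q _ (fun i => zero_div _) (fun i a b => add_div a b _)
  map_smul' c p := by
    dsimp
    rw [Polynomial.sum_smul_index p c (fun i a => a / (i + 1)) (fun i => zero_div _),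
      Polynomial.sum_def, Polynomial.sum_def, Finset.mul_sum]
    exact Finset.sum_congr rfl fun i _ => mul_div_assoc _ _ _

lemma Lint_apply (p : ℚ[X]) : Lint p = p.sum fun i a => a / (i + 1) := rfl

lemma Lint_C (c : ℚ) : Lint (C c) = c := by
  rw [Lint_apply, Polynomial.sum_C_index (zero_div _)]
  norm_num

lemma Lint_Cmul (c : ℚ) (p : ℚ[X]) : Lint (C c * p) = c * Lint p := by
  rw [← Polynomial.smul_eq_C_mul, map_smul, smul_eq_mul]

lemma Lint_derivative (p : ℚ[X]) : Lint (derivative p) = p.eval 1 - p.eval 0 := by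
  induction p using Polynomial.induction_on' with
  | add p q hp hq => simp only [derivative_add, map_add, hp, hq, eval_add]; ring
  | monomial n a =>
    cases n with
    | zero => simp [Lint_apply]
    | succ k =>
      rw [derivative_monomial, Lint_apply,
        Polynomial.sum_monomial_index (a * (k+1 : ℕ)) (fun i a => a / (i + 1)) (zero_div _)]
      simp
      field_simp

lemma bern_eval_two (k : ℕ) : (Polynomial.bernoulli (k+2)).eval 2 = _root_.bernoulli (k+2) + (k+2) := by
  have h := Polynomial.bernoulli_eval_one_add (k+2) 1
  norm_num at h
  rw [h, bernoulli_eq_bernoulli'_of_ne_one (show k+2 ≠ 1 by omega)]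

lemma Lint_bernoulli_succ (k : ℕ) : Lint (Polynomial.bernoulli (k+1)) = 0 := by
  have h : Polynomial.bernoulli (k+1)
      = derivative (C (((k:ℚ)+2)⁻¹) * Polynomial.bernoulli (k+2)) := by
    apply Polynomial.funext; intro y
    simp [Polynomial.derivative_bernoulli_add_one]
    field_simp
    ring
  rw [h, Lint_derivative]
  simp [Polynomial.bernoulli_eval_one, Polynomial.bernoulli_eval_zero,
    ← bernoulli_eq_bernoulli'_of_ne_one (show k+2 ≠ 1 by omega)]

lemma Lint_comp (k : ℕ) : Lint ((Polynomial.bernoulli (k+1)).comp (C 2 * X)) = 1/2 := by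
  have h : (Polynomial.bernoulli (k+1)).comp (C 2 * X)
      = derivative (C ((2*((k:ℚ)+2))⁻¹) * (Polynomial.bernoulli (k+2)).comp (C 2 * X)) := by
    apply Polynomial.funext; intro y
    simp [Polynomial.derivative_bernoulli_add_one, derivative_comp, eval_comp]
    field_simp
    ring
  rw [h, Lint_derivative]
  simp [eval_comp, bern_eval_two k, Polynomial.bernoulli_eval_zero]
  norm_num [bern_eval_two k]
  field_simp
  ring

lemma Lint_XB (k : ℕ) : Lint (X * (Polynomial.bernoulli (k+1)).comp (C 2 * X))
    = (_root_.bernoulli (k+2) + ((k:ℚ)+2) - 1/2) / (2*((k:ℚ)+2)) := by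
  have h : X * (Polynomial.bernoulli (k+1)).comp (C 2 * X)
      = derivative (C ((2*((k:ℚ)+2))⁻¹) * (X * (Polynomial.bernoulli (k+2)).comp (C 2 * X)))
        - C ((2*((k:ℚ)+2))⁻¹) * (Polynomial.bernoulli (k+2)).comp (C 2 * X) := by
    apply Polynomial.funext; intro y
    simp [Polynomial.derivative_bernoulli_add_one, derivative_comp, eval_comp]
    field_simp
    ring
  rw [h, map_sub, Lint_derivative, Lint_Cmul]
  have h2 : (Polynomial.bernoulli (k+2)).comp (C 2 * X) = (Polynomial.bernoulli ((k+1)+1)).comp (C 2 * X) := rfl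
  rw [h2, Lint_comp (k+1)]
  simp [eval_comp, bern_eval_two k, Polynomial.bernoulli_eval_zero]
  field_simp

noncomputable def Pp (n : ℕ) : ℚ[X] :=
  ∑ l ∈ Finset.range (n+1),
    C ((n.choose l : ℚ) * (1/2^l) * _root_.bernoulli l) * Polynomial.bernoulli (n - l)

noncomputable def Qp (m : ℕ) : ℚ[X] :=
  C (((m:ℚ)+1)/2^(m+1)) * (C 2 * X - 1) * (Polynomial.bernoulli m).comp (C 2 * X)
  - C ((m:ℚ)/2^(m+1)) * (Polynomial.bernoulli (m+1)).comp (C 2 * X)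
  - C (((m:ℚ)+1)/4) * Polynomial.bernoulli m

lemma dP (n : ℕ) : derivative (Pp (n+1)) = C ((n:ℚ)+1) * Pp n := by
  simp only [Pp, derivative_sum, Finset.mul_sum]
  rw [Finset.sum_range_succ]
  have hlast : derivative (C (((n+1).choose (n+1) : ℚ) * (1/2^(n+1)) * _root_.bernoulli (n+1)) *
      Polynomial.bernoulli (n+1-(n+1))) = 0 := by
    simp [Polynomial.bernoulli_zero]
  rw [hlast, add_zero]
  refine Finset.sum_congr rfl fun l hl => ?_
  have hl' : l ≤ n := by simpa [Nat.lt_succ_iff] using hl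
  rw [derivative_C_mul, Polynomial.derivative_bernoulli]
  have h1 : n + 1 - l - 1 = n - l := by omega
  rw [h1, ← mul_assoc, ← Polynomial.C_eq_natCast, ← C_mul, ← mul_assoc, ← C_mul]
  congr 2
  have key : (((n+1).choose l : ℕ) : ℚ) * ((n:ℚ)+1-l) = ((n.choose l : ℕ) : ℚ) * ((n:ℚ)+1) := by
    have h := Nat.choose_mul_succ_eq n l
    have : ((n.choose l * (n + 1) : ℕ) : ℚ) = (((n+1).choose l * (n + 1 - l) : ℕ) : ℚ) :=
      congrArg (fun t : ℕ => (t : ℚ)) h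
    push_cast [Nat.cast_sub (show l ≤ n+1 by omega)] at this
    linarith [this]
  have hcast : ((n + 1 - l : ℕ) : ℚ) = (n:ℚ) + 1 - l := by
    push_cast [Nat.cast_sub (show l ≤ n+1 by omega)]
    ring
  rw [hcast]
  field_simp
  linear_combination (_root_.bernoulli l) * key

lemma dQ (m : ℕ) : derivative (Qp (m+1)) = C ((m:ℚ)+2) * Qp m := by
  simp only [Qp]
  apply Polynomial.funext; intro y
  simp only [derivative_sub, derivative_mul, derivative_C, derivative_X, derivative_one,
    derivative_comp, Polynomial.derivative_bernoulli_add_one, eval_sub, eval_mul, eval_add,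
    eval_comp, eval_C, eval_X, eval_one, eval_natCast, zero_mul, mul_zero, zero_add, add_zero,
    zero_sub, sub_zero, mul_one, one_mul, eval_zero, Polynomial.natCast_comp, mul_comp, C_comp]
  push_cast
  field_simp
  ring

lemma LP (m : ℕ) : Lint (Pp (m+2)) = _root_.bernoulli (m+2) / 2^(m+2) := by
  rw [Pp, map_sum, Finset.sum_eq_single (m+2)]
  · rw [Lint_Cmul]
    simp [Polynomial.bernoulli_zero, show Lint 1 = 1 from by rw [← Polynomial.C_1, Lint_C]]
    ring
  · intro l hl hne
    have : ∃ j, m + 2 - l = j + 1 := ⟨m + 1 - l, by simp at hl; omega⟩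
    obtain ⟨j, hj⟩ := this
    rw [Lint_Cmul, hj, Lint_bernoulli_succ, mul_zero]
  · intro h; exact absurd (Finset.self_mem_range_succ (m+2)) h

lemma LQ (m : ℕ) : Lint (Qp (m+1)) = _root_.bernoulli (m+2) / 2^(m+2) := by
  have hrw : Qp (m+1) = C (2*(((m:ℚ)+2)/2^(m+2))) * (X * (Polynomial.bernoulli (m+1)).comp (C 2 * X))
      - C (((m:ℚ)+2)/2^(m+2)) * ((Polynomial.bernoulli (m+1)).comp (C 2 * X))
      - C (((m:ℚ)+1)/2^(m+2)) * ((Polynomial.bernoulli (m+2)).comp (C 2 * X))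
      - C (((m:ℚ)+2)/4) * Polynomial.bernoulli (m+1) := by
    apply Polynomial.funext; intro y
    simp only [Qp, eval_sub, eval_mul, eval_C, eval_X, eval_one, eval_comp]
    push_cast
    ring
  have h1 : Lint ((Polynomial.bernoulli (m+2)).comp (C 2 * X)) = 1/2 := Lint_comp (m+1)
  rw [hrw, map_sub, map_sub, map_sub, Lint_Cmul, Lint_Cmul, Lint_Cmul, Lint_Cmul,
    Lint_XB m, Lint_comp m, h1, Lint_bernoulli_succ m]
  have h2 : ((m:ℚ)+2) ≠ 0 := by positivity
  field_simp
  ring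

lemma base : Pp 1 = Qp 0 := by
  apply Polynomial.funext; intro y
  simp [Pp, Qp, Finset.sum_range_succ, Polynomial.bernoulli, eval_comp,
    _root_.bernoulli_one, _root_.bernoulli_zero]
  ring

lemma key (m : ℕ) : Pp (m+1) = Qp m := by
  induction m with
  | zero => exact base
  | succ m ih =>
    have hd : derivative (Pp (m+2) - Qp (m+1)) = 0 := by
      have e1 : derivative (Pp (m+2)) = C (((m+1:ℕ):ℚ)+1) * Pp (m+1) := dP (m+1)
      have e2 : (((m+1:ℕ):ℚ)+1) = ((m:ℚ)+2) := by push_cast; ring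
      rw [derivative_sub, e1, e2, dQ m, ih, sub_self]
    have hC := Polynomial.eq_C_of_derivative_eq_zero hd
    have hL : Lint (Pp (m+2) - Qp (m+1)) = 0 := by
      rw [map_sub, LP m, LQ m, sub_self]
    have hzero : Pp (m+2) - Qp (m+1) = 0 := by
      rw [hC] at hL
      rw [Lint_C] at hL
      rw [hC, hL, map_zero]
    exact sub_eq_zero.mp hzero

theorem bernoulli_half_convolution (n : ℕ) (hn : 1 ≤ n) (x : ℚ) :
    ∑ l ∈ Finset.range (n + 1),
        (n.choose l : ℚ) * (1 / 2 ^ l) * _root_.bernoulli l * (Polynomial.bernoulli (n - l)).eval x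
      = ((n : ℚ) / 2 ^ n) * (2 * x - 1) * (Polynomial.bernoulli (n - 1)).eval (2 * x)
        - (((n : ℚ) - 1) / 2 ^ n) * (Polynomial.bernoulli n).eval (2 * x)
        - ((n : ℚ) / 4) * (Polynomial.bernoulli (n - 1)).eval x := by
  obtain ⟨m, rfl⟩ : ∃ m, n = m + 1 := ⟨n - 1, by omega⟩
  have h := congrArg (Polynomial.eval x) (key m)
  simp only [Pp, Qp, eval_finset_sum, eval_mul, eval_sub, eval_C, eval_X, eval_one,
    eval_comp, Nat.add_sub_cancel] at h ⊢
  rw [h]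
  push_cast
  ring
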